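/- arXiv:1512.03671 — 4 statements merged into one kernel-verified Lean document; each statement's English description precedes it below -/
import Mathlib

section
/- Let n ≥ 2 and let W ∈ ℂⁿ be a unit vector (with respect to the standard Hermitian inner product ⟨·,·⟩). Then there exist μ ∈ ℂ with |μ| = 1, vectors X, Y ∈ ℂⁿ with all coordinates real and orthonormal (⟨X,X⟩ = ⟨Y,Y⟩ = 1, ⟨X,Y⟩ = 0), and t ∈ [0, π/4], such that W = μ·(cos t · X + sin t · i·Y). -/
open Complex Finset

lemma exists_real_unit_orthogonal' (n : ℕ) (hn : 2 ≤ n) (a : EuclideanSpace ℝ (Fin n))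
    (ha : ‖a‖ = 1) : ∃ y : EuclideanSpace ℝ (Fin n), ‖y‖ = 1 ∧ (inner ℝ a y : ℝ) = 0 := by
  have ha0 : a ≠ 0 := by intro h; rw [h, norm_zero] at ha; norm_num at ha
  have hbot : ((ℝ ∙ a)ᗮ : Submodule ℝ (EuclideanSpace ℝ (Fin n))) ≠ ⊥ := by
    intro h
    have hspan : (ℝ ∙ a : Submodule ℝ (EuclideanSpace ℝ (Fin n))) = ⊤ :=
      Submodule.orthogonal_eq_bot_iff.mp h
    have h1 : Module.finrank ℝ (ℝ ∙ a : Submodule ℝ (EuclideanSpace ℝ (Fin n))) = 1 :=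
      finrank_span_singleton ha0
    rw [hspan] at h1
    have h2 : Module.finrank ℝ (EuclideanSpace ℝ (Fin n)) = n := by simp
    rw [finrank_top] at h1
    omega
  obtain ⟨y0, hy0mem, hy0⟩ := Submodule.exists_mem_ne_zero_of_ne_bot hbot
  refine ⟨‖y0‖⁻¹ • y0, ?_, ?_⟩
  · rw [norm_smul, norm_inv, norm_norm, inv_mul_cancel₀ (norm_ne_zero_iff.mpr hy0)]
  · rw [inner_smul_right]
    have := Submodule.mem_orthogonal_singleton_iff_inner_right.mp hy0mem
    rw [this, mul_zero]



/-- Every unit vector `W ∈ ℂⁿ` (`n ≥ 2`, standard Hermitian inner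
product) can be written as `W = μ • (cos t • X + sin t • (i • Y))` where `|μ| = 1`,
`X, Y` have all coordinates real and are orthonormal, and `t ∈ [0, π/4]`. -/
theorem canonical_form_of_unit_vector
    (n : ℕ) (hn : 2 ≤ n) (W : EuclideanSpace ℂ (Fin n)) (hW : ‖W‖ = 1) :
    ∃ (μ : ℂ) (X Y : EuclideanSpace ℂ (Fin n)) (t : ℝ),
      ‖μ‖ = 1 ∧
      (∀ j, (X j).im = 0) ∧ (∀ j, (Y j).im = 0) ∧
      (inner ℂ X X : ℂ) = 1 ∧ (inner ℂ Y Y : ℂ) = 1 ∧ (inner ℂ X Y : ℂ) = 0 ∧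
      t ∈ Set.Icc (0 : ℝ) (Real.pi / 4) ∧
      W = μ • (Real.cos t • X + Real.sin t • (Complex.I • Y)) := by
  classical
  set c : ℂ := ∑ j, (W j)^2 with hc
  set r : ℝ := ‖c‖ with hr
  have hr0 : 0 ≤ r := norm_nonneg c
  -- sum of |W j|^2 = 1
  have hsum1 : ∑ j, ‖W j‖ ^ 2 = 1 := by
    have h := EuclideanSpace.norm_eq W
    rw [hW] at h
    have := Real.sqrt_eq_one.mp h.symm
    simpa using this
  have hr1 : r ≤ 1 := by
    calc r ≤ ∑ j, ‖(W j)^2‖ := norm_sum_le _ _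
    _ = ∑ j, ‖W j‖ ^ 2 := by simp [norm_pow]
    _ = 1 := hsum1
  set μ : ℂ := Complex.exp ((c.arg / 2 : ℝ) * Complex.I) with hμ
  have hμabs : ‖μ‖ = 1 := Complex.norm_exp_ofReal_mul_I _
  have hconjμ : (starRingEnd ℂ) μ = Complex.exp (-((c.arg / 2 : ℝ) * Complex.I)) := by
    rw [hμ, ← Complex.exp_conj]
    congr 1
    simp [Complex.conj_ofReal, map_ofNat]
  have hsq : ((starRingEnd ℂ) μ)^2 = Complex.exp (-(c.arg * Complex.I)) := by
    rw [hconjμ, ← Complex.exp_nat_mul]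
    congr 1
    push_cast
    ring
  have hkey : ((starRingEnd ℂ) μ)^2 * c = (r : ℂ) := by
    have hcval : c = (r : ℂ) * Complex.exp (c.arg * Complex.I) :=
      (Complex.norm_mul_exp_arg_mul_I c).symm
    rw [hsq]
    nth_rewrite 2 [hcval]
    rw [mul_comm ((r:ℂ)) _, ← mul_assoc, ← Complex.exp_add, neg_add_cancel,
      Complex.exp_zero, one_mul]
  set W' : EuclideanSpace ℂ (Fin n) := (starRingEnd ℂ μ) • W with hW'
  have hWrec : W = μ • W' := by
    rw [hW', smul_smul, Complex.mul_conj]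
    have : Complex.normSq μ = 1 := by
      rw [← Complex.sq_norm, hμabs]; norm_num
    rw [this]
    norm_num
  set a : Fin n → ℝ := fun j => (W' j).re with ha
  set b : Fin n → ℝ := fun j => (W' j).im with hb
  have hW'j : ∀ j, W' j = (a j : ℂ) + (b j : ℂ) * Complex.I := by
    intro j; rw [ha, hb]; simp [Complex.re_add_im]
  -- norm of W' is 1
  have hsum2 : ∑ j, (a j ^ 2 + b j ^ 2) = 1 := by
    have : ∀ j, a j ^ 2 + b j ^ 2 = ‖W' j‖ ^ 2 := by
      intro j
      rw [Complex.sq_norm, Complex.normSq_apply, ha, hb]; ring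
    rw [Finset.sum_congr rfl fun j _ => this j]
    have : ∀ j, ‖W' j‖ ^ 2 = ‖W j‖ ^ 2 := by
      intro j
      rw [hW']
      simp only [PiLp.smul_apply, smul_eq_mul, norm_mul, Complex.norm_conj, hμabs, one_mul]
    rw [Finset.sum_congr rfl fun j _ => this j, hsum1]
  have hsumsq : ∑ j, (W' j)^2 = (r : ℂ) := by
    have : ∀ j, (W' j)^2 = ((starRingEnd ℂ) μ)^2 * (W j)^2 := by
      intro j; rw [hW']; simp [PiLp.smul_apply, smul_eq_mul]; ring
    rw [Finset.sum_congr rfl fun j _ => this j, ← Finset.mul_sum, ← hc, hkey]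
  have hre : ∑ j, (a j ^ 2 - b j ^ 2) = r := by
    have := congrArg Complex.re hsumsq
    rw [Complex.re_sum] at this
    simpa [hW'j, Complex.mul_re, sq] using this
  have him : ∑ j, (a j * b j) = 0 := by
    have := congrArg Complex.im hsumsq
    rw [Complex.im_sum] at this
    simp only [Complex.ofReal_im] at this
    have h2 : ∑ j, ((W' j)^2).im = ∑ j, 2 * (a j * b j) := by
      refine Finset.sum_congr rfl fun j _ => ?_
      rw [sq, Complex.mul_im, ha, hb]; ring
    rw [h2, ← Finset.mul_sum] at this
    linarith
  set ca : ℝ := ∑ j, a j ^ 2 with hca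
  set cb : ℝ := ∑ j, b j ^ 2 with hcb
  have hsum_split : ca + cb = 1 := by
    rw [hca, hcb, ← Finset.sum_add_distrib]; exact hsum2
  have hsub_split : ca - cb = r := by
    rw [hca, hcb, ← Finset.sum_sub_distrib]; exact hre
  have hcaval : ca = (1 + r) / 2 := by linarith
  have hcbval : cb = (1 - r) / 2 := by linarith
  have hcb0 : 0 ≤ cb := Finset.sum_nonneg fun j _ => sq_nonneg _
  have hca_pos : 0 < ca := by linarith
  set t : ℝ := Real.arcsin (Real.sqrt cb) with htdef
  have hsqcb : Real.sqrt cb ^ 2 = cb := Real.sq_sqrt hcb0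
  have hsqcb_le : Real.sqrt cb ≤ 1 := by
    rw [show (1:ℝ) = Real.sqrt 1 by simp]
    exact Real.sqrt_le_sqrt (by linarith)
  have hsint : Real.sin t = Real.sqrt cb :=
    Real.sin_arcsin (by linarith [Real.sqrt_nonneg cb]) hsqcb_le
  have hcost : Real.cos t = Real.sqrt ca := by
    rw [htdef, Real.cos_arcsin, hsqcb]
    congr 1
    linarith
  have hcost_pos : 0 < Real.cos t := by
    rw [hcost]; exact Real.sqrt_pos.mpr hca_pos
  have hcost_sq : Real.cos t ^ 2 = ca := by rw [hcost]; exact Real.sq_sqrt hca_pos.le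
  have hsint_sq : Real.sin t ^ 2 = cb := by rw [hsint]; exact hsqcb
  have htmem : t ∈ Set.Icc (0:ℝ) (Real.pi / 4) := by
    constructor
    · exact Real.arcsin_nonneg.mpr (Real.sqrt_nonneg _)
    · have h1 : Real.sqrt cb ≤ Real.sin (Real.pi / 4) := by
        rw [Real.sin_pi_div_four]
        have : Real.sqrt cb ≤ Real.sqrt (1/2) := Real.sqrt_le_sqrt (by linarith)
        refine this.trans (le_of_eq ?_)
        rw [show (1:ℝ)/2 = (Real.sqrt 2 / 2)^2 by
          rw [div_pow, Real.sq_sqrt (by norm_num : (0:ℝ) ≤ 2)]; norm_num]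
        exact Real.sqrt_sq (by positivity)
      have h2 := Real.monotone_arcsin h1
      rwa [Real.arcsin_sin (by linarith [Real.pi_pos]) (by linarith [Real.pi_pos])] at h2
  -- inner product of real-coordinate vectors
  have hinner : ∀ (X Y : EuclideanSpace ℂ (Fin n)) (u v : Fin n → ℝ),
      (∀ j, X j = (u j : ℂ)) → (∀ j, Y j = (v j : ℂ)) →
      (inner ℂ X Y : ℂ) = ((∑ j, u j * v j : ℝ) : ℂ) := by
    intro X Y u v hX hY
    rw [PiLp.inner_apply]
    push_cast
    refine Finset.sum_congr rfl fun j _ => ?_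
    rw [hX j, hY j]
    simp [RCLike.inner_apply, Complex.conj_ofReal, mul_comm]
  by_cases hcbz : cb = 0
  · -- degenerate case : b = 0
    have hbj : ∀ j, b j = 0 := by
      intro j
      have h := (Finset.sum_eq_zero_iff_of_nonneg (fun j _ => sq_nonneg (b j))).mp
        (hcb ▸ hcbz) j (Finset.mem_univ j)
      exact (pow_eq_zero_iff two_ne_zero).mp h
    have hca1 : ca = 1 := by linarith
    have hsint0 : Real.sin t = 0 := by rw [hsint, hcbz, Real.sqrt_zero]
    have hcost1 : Real.cos t = 1 := by rw [hcost, hca1, Real.sqrt_one]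
    let a' : EuclideanSpace ℝ (Fin n) := WithLp.toLp 2 a
    have hanorm : ‖a'‖ = 1 := by
      rw [EuclideanSpace.norm_eq]
      have : ∑ j, ‖a j‖ ^ 2 = ca := by
        rw [hca]; exact Finset.sum_congr rfl fun j _ => by rw [Real.norm_eq_abs, _root_.sq_abs]
      rw [show ∑ i, ‖a'.ofLp i‖ ^ 2 = ca from this, hca1, Real.sqrt_one]
    obtain ⟨y, hynorm, hyorth⟩ := exists_real_unit_orthogonal' n hn a' hanorm
    have hysum : ∑ j, y j * y j = 1 := by
      have h := EuclideanSpace.norm_eq y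
      rw [hynorm] at h
      have h2 := Real.sqrt_eq_one.mp h.symm
      calc ∑ j, y j * y j = ∑ j, ‖y j‖ ^ 2 :=
            Finset.sum_congr rfl fun j _ => by rw [Real.norm_eq_abs, sq, abs_mul_abs_self]
        _ = 1 := h2
    have haysum : ∑ j, a j * y j = 0 := by
      rw [PiLp.inner_apply] at hyorth
      simpa [RCLike.inner_apply, a', mul_comm] using hyorth
    refine ⟨μ, WithLp.toLp 2 (fun j => ((a j : ℝ) : ℂ)), WithLp.toLp 2 (fun j => ((y j : ℝ) : ℂ)), t, hμabs,
      fun j => Complex.ofReal_im _, fun j => Complex.ofReal_im _, ?_, ?_, ?_, htmem, ?_⟩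
    · rw [hinner _ _ _ _ (fun j => rfl) (fun j => rfl)]
      norm_cast
      rw [show ∑ j, a j * a j = ca by rw [hca]; exact Finset.sum_congr rfl fun j _ => by ring, hca1]
    · rw [hinner _ _ _ _ (fun j => rfl) (fun j => rfl)]; norm_cast
    · rw [hinner _ _ _ _ (fun j => rfl) (fun j => rfl)]; norm_cast
    · rw [hWrec]
      congr 1
      ext j
      simp only [PiLp.add_apply, PiLp.smul_apply, PiLp.toLp_apply, smul_eq_mul, Complex.real_smul]
      rw [hW'j j, hbj j, hsint0, hcost1]
      push_cast
      ring
  · -- generic case : cb > 0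
    have hcb_pos : 0 < cb := lt_of_le_of_ne hcb0 (Ne.symm hcbz)
    have hsint_pos : 0 < Real.sin t := by rw [hsint]; exact Real.sqrt_pos.mpr hcb_pos
    refine ⟨μ, WithLp.toLp 2 (fun j => ((a j / Real.cos t : ℝ) : ℂ)),
      WithLp.toLp 2 (fun j => ((b j / Real.sin t : ℝ) : ℂ)), t, hμabs,
      fun j => Complex.ofReal_im _, fun j => Complex.ofReal_im _, ?_, ?_, ?_, htmem, ?_⟩
    · rw [hinner _ _ _ _ (fun j => rfl) (fun j => rfl)]
      norm_cast
      have : ∑ j, a j / Real.cos t * (a j / Real.cos t) = ca / Real.cos t ^ 2 := by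
        rw [hca, Finset.sum_div]
        refine Finset.sum_congr rfl fun j _ => ?_
        rw [div_mul_div_comm, ← sq, ← sq]
      rw [this, hcost_sq, div_self hca_pos.ne']
    · rw [hinner _ _ _ _ (fun j => rfl) (fun j => rfl)]
      norm_cast
      have : ∑ j, b j / Real.sin t * (b j / Real.sin t) = cb / Real.sin t ^ 2 := by
        rw [hcb, Finset.sum_div]
        refine Finset.sum_congr rfl fun j _ => ?_
        rw [div_mul_div_comm, ← sq, ← sq]
      rw [this, hsint_sq, div_self hcb_pos.ne']
    · rw [hinner _ _ _ _ (fun j => rfl) (fun j => rfl)]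
      norm_cast
      have : ∑ j, a j / Real.cos t * (b j / Real.sin t)
          = (∑ j, a j * b j) / (Real.cos t * Real.sin t) := by
        rw [Finset.sum_div]
        refine Finset.sum_congr rfl fun j _ => ?_
        rw [div_mul_div_comm]
      rw [this, him, zero_div]
    · rw [hWrec]
      congr 1
      ext j
      simp only [PiLp.add_apply, PiLp.smul_apply, PiLp.toLp_apply, smul_eq_mul, Complex.real_smul]
      rw [hW'j j]
      have hc1 : Complex.cos (t : ℂ) ≠ 0 := by
        rw [← Complex.ofReal_cos]
        exact Complex.ofReal_ne_zero.mpr hcost_pos.ne'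
      have hc2 : Complex.sin (t : ℂ) ≠ 0 := by
        rw [← Complex.ofReal_sin]
        exact Complex.ofReal_ne_zero.mpr hsint_pos.ne'
      push_cast
      field_simp
end

section
/- Let X, Y ∈ ℝⁿ ⊂ ℂⁿ be orthonormal vectors and set W = (X + i·Y)/√2 (an 𝔄-isotropic singular unit vector). Then the Jacobi operator R_W satisfies: R_W(W) = 0 and R_W(Z) = 0 for every Z in the complex line ℂ·(i·X + Y); R_W(Z) = Z for every Z ∈ ℂⁿ with ⟨Z,X⟩ = 0 and ⟨Z,Y⟩ = 0 (complex inner products); and R_W(i·W) = 4·i·W. In other words, the eigenvalues of R_W are 0, 1 and 4 with eigenspaces ℝW ⊕ ℂ(JX+Y), ℂⁿ ⊖ (ℂX ⊕ ℂY) and ℝJW respectively. -/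
noncomputable section

/-- The real inner product `g(X,Y) = Re⟨X,Y⟩` on `ℂⁿ`. -/
def gQ {n : ℕ} (X Y : EuclideanSpace ℂ (Fin n)) : ℝ :=
  (inner ℂ X Y : ℂ).re

/-- The Kähler structure `J` (multiplication by `i`). -/
def JQ {n : ℕ} (X : EuclideanSpace ℂ (Fin n)) : EuclideanSpace ℂ (Fin n) :=
  Complex.I • X

/-- The complex conjugation `A` (coordinatewise conjugation). -/
def AQ {n : ℕ} (X : EuclideanSpace ℂ (Fin n)) : EuclideanSpace ℂ (Fin n) :=
  WithLp.toLp 2 (fun j => (starRingEnd ℂ) (X j))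

/-- The curvature tensor of the complex quadric in the linear model. -/
def Rbar {n : ℕ} (X Y Z : EuclideanSpace ℂ (Fin n)) : EuclideanSpace ℂ (Fin n) :=
  gQ Y Z • X - gQ X Z • Y + gQ (JQ Y) Z • JQ X - gQ (JQ X) Z • JQ Y
    - ((2 : ℝ) * gQ (JQ X) Y) • JQ Z
    + gQ (AQ Y) Z • AQ X - gQ (AQ X) Z • AQ Y
    + gQ (JQ (AQ Y)) Z • JQ (AQ X) - gQ (JQ (AQ X)) Z • JQ (AQ Y)

/-- The Jacobi operator `R_W = R̄(·, W) W`. -/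
def jacobiOp {n : ℕ} (W X : EuclideanSpace ℂ (Fin n)) : EuclideanSpace ℂ (Fin n) :=
  Rbar X W W


lemma gQ_JQ_left {n} (U V : EuclideanSpace ℂ (Fin n)) : gQ (JQ U) V = (inner ℂ U V : ℂ).im := by
  simp [gQ, JQ, inner_smul_left, Complex.mul_re]

lemma AQ_add {n} (U V : EuclideanSpace ℂ (Fin n)) : AQ (U + V) = AQ U + AQ V := by
  ext j; simp [AQ, PiLp.add_apply]

lemma AQ_smul {n} (c : ℂ) (U : EuclideanSpace ℂ (Fin n)) :
    AQ (c • U) = (starRingEnd ℂ c) • AQ U := by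
  ext j; simp [AQ, PiLp.smul_apply]

lemma AQ_real_smul {n} (r : ℝ) (U : EuclideanSpace ℂ (Fin n)) : AQ (r • U) = r • AQ U := by
  rw [← Complex.coe_smul, AQ_smul, Complex.conj_ofReal, Complex.coe_smul]

lemma inner_AQ_symm {n} (U V : EuclideanSpace ℂ (Fin n)) :
    (inner ℂ (AQ U) V : ℂ) = inner ℂ (AQ V) U := by
  simp [AQ, PiLp.inner_apply, RCLike.inner_apply, mul_comm]

lemma jacobi_eval {n} (W Z : EuclideanSpace ℂ (Fin n)) (a b : ℂ)
    (hWW : (inner ℂ W W : ℂ) = 1) (hAWW : (inner ℂ (AQ W) W : ℂ) = 0)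
    (ha : (inner ℂ Z W : ℂ) = a) (hb : (inner ℂ (AQ Z) W : ℂ) = b) :
    jacobiOp W Z = Z - a.re • W - (3 * a.im) • JQ W - b.re • AQ W - b.im • JQ (AQ W) := by
  show Rbar Z W W = _
  unfold Rbar
  simp only [gQ_JQ_left]
  simp only [gQ, hWW, ha, hb, hAWW, Complex.one_re, Complex.one_im,
    Complex.zero_re, Complex.zero_im]
  module

/-- For an `𝔄`-isotropic singular unit vector `W = (X + i·Y)/√2`, with
`X, Y ∈ ℝⁿ` orthonormal, the Jacobi operator `R_W` has eigenvalues `0`, `1` and `4`,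
with eigenspaces `ℝW ⊕ ℂ(JX+Y)`, `ℂⁿ ⊖ (ℂX ⊕ ℂY)` and `ℝJW` respectively. -/
theorem jacobi_operator_isotropic_singular_vector
    (n : ℕ) (hn : 2 ≤ n) (X Y : EuclideanSpace ℂ (Fin n))
    (hXreal : ∀ j, (X j).im = 0) (hYreal : ∀ j, (Y j).im = 0)
    (hX : ‖X‖ = 1) (hY : ‖Y‖ = 1) (hXY : (inner ℂ X Y : ℂ) = 0)
    (W : EuclideanSpace ℂ (Fin n))
    (hW : W = (Real.sqrt 2)⁻¹ • (X + Complex.I • Y)) :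
    jacobiOp W W = 0 ∧
    (∀ c : ℂ, jacobiOp W (c • (Complex.I • X + Y)) = 0) ∧
    (∀ Z : EuclideanSpace ℂ (Fin n),
      (inner ℂ Z X : ℂ) = 0 → (inner ℂ Z Y : ℂ) = 0 → jacobiOp W Z = Z) ∧
    jacobiOp W (Complex.I • W) = (4 : ℝ) • (Complex.I • W) := by
  have hAX : AQ X = X := by ext j; exact Complex.conj_eq_iff_im.mpr (hXreal j)
  have hAY : AQ Y = Y := by ext j; exact Complex.conj_eq_iff_im.mpr (hYreal j)
  have hXX : (inner ℂ X X : ℂ) = 1 := by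
    rw [inner_self_eq_norm_sq_to_K, hX]; norm_num
  have hYY : (inner ℂ Y Y : ℂ) = 1 := by
    rw [inner_self_eq_norm_sq_to_K, hY]; norm_num
  have hYX : (inner ℂ Y X : ℂ) = 0 := by rw [← inner_conj_symm, hXY, map_zero]
  have hs2 : ((Real.sqrt 2 : ℂ))⁻¹ * ((Real.sqrt 2 : ℂ))⁻¹ = 2⁻¹ := by
    rw [← mul_inv]
    norm_cast
    rw [Real.mul_self_sqrt (by norm_num : (0:ℝ) ≤ 2)]
    norm_num
  have hAW : AQ W = (Real.sqrt 2)⁻¹ • (X - Complex.I • Y) := by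
    rw [hW, AQ_real_smul, AQ_add, AQ_smul, hAX, hAY, Complex.conj_I, neg_smul, ← sub_eq_add_neg]
  have hinW : ∀ U : EuclideanSpace ℂ (Fin n), (inner ℂ U W : ℂ) =
      ((Real.sqrt 2 : ℂ))⁻¹ * ((inner ℂ U X : ℂ) + Complex.I * (inner ℂ U Y : ℂ)) := by
    intro U
    rw [hW, ← Complex.coe_smul, inner_smul_right, inner_add_right, inner_smul_right]
    push_cast
    ring
  have hXW : (inner ℂ X W : ℂ) = ((Real.sqrt 2 : ℂ))⁻¹ := by
    rw [hinW, hXX, hXY]; ring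
  have hYW : (inner ℂ Y W : ℂ) = ((Real.sqrt 2 : ℂ))⁻¹ * Complex.I := by
    rw [hinW, hYX, hYY]; ring
  have hWX : (inner ℂ W X : ℂ) = ((Real.sqrt 2 : ℂ))⁻¹ := by
    rw [← inner_conj_symm, hXW]
    simp
  have hWY : (inner ℂ W Y : ℂ) = -(((Real.sqrt 2 : ℂ))⁻¹ * Complex.I) := by
    rw [← inner_conj_symm, hYW]
    simp
  have hWW : (inner ℂ W W : ℂ) = 1 := by
    rw [hinW, hWX, hWY]
    linear_combination 2 * hs2 - ((Real.sqrt 2 : ℂ))⁻¹ * ((Real.sqrt 2 : ℂ))⁻¹ * Complex.I_sq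
  have hAWW : (inner ℂ (AQ W) W : ℂ) = 0 := by
    rw [hAW, ← Complex.coe_smul, inner_smul_left, Complex.conj_ofReal, inner_sub_left,
      inner_smul_left, Complex.conj_I, hXW, hYW]
    push_cast
    linear_combination ((Real.sqrt 2 : ℂ))⁻¹ * ((Real.sqrt 2 : ℂ))⁻¹ * Complex.I_sq
  refine ⟨?_, ?_, ?_, ?_⟩
  · rw [jacobi_eval W W 1 0 hWW hAWW hWW hAWW]
    simp
  · intro c
    have hAZ : AQ (c • (Complex.I • X + Y)) = (starRingEnd ℂ c) • ((-Complex.I) • X + Y) := by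
      rw [AQ_smul, AQ_add, AQ_smul, hAX, hAY, Complex.conj_I]
    have ha : (inner ℂ (c • (Complex.I • X + Y)) W : ℂ) = 0 := by
      rw [inner_smul_left, inner_add_left, inner_smul_left, Complex.conj_I, hXW, hYW]
      ring
    obtain ⟨b, hbv⟩ : ∃ b : ℂ, b = 2 * Complex.I * ((Real.sqrt 2 : ℂ))⁻¹ * c := ⟨_, rfl⟩
    have hb : (inner ℂ (AQ (c • (Complex.I • X + Y))) W : ℂ) = b := by
      rw [hbv, hAZ, inner_smul_left, inner_add_left, inner_smul_left, hXW, hYW]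
      simp only [Complex.conj_conj, map_neg, Complex.conj_I]
      ring
    have hbre : (b.re : ℂ) + b.im * Complex.I = b := Complex.re_add_im b
    rw [jacobi_eval W _ 0 b hWW hAWW ha hb, hAW]
    simp only [JQ, Complex.zero_re, Complex.zero_im, zero_smul, mul_zero, sub_zero]
    match_scalars <;> simp only [Complex.coe_algebraMap] <;> push_cast
    · linear_combination (-((Real.sqrt 2 : ℂ))⁻¹) * hbre + (-((Real.sqrt 2 : ℂ))⁻¹) * hbv
        + (-2 * Complex.I * c) * hs2
    · linear_combination (((Real.sqrt 2 : ℂ))⁻¹ * Complex.I) * hbre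
        + (((Real.sqrt 2 : ℂ))⁻¹ * Complex.I) * hbv + (-2 * c) * hs2
        + (2 * c * ((Real.sqrt 2 : ℂ))⁻¹ ^ 2) * Complex.I_sq
  · intro Z hZX hZY
    have ha : (inner ℂ Z W : ℂ) = 0 := by rw [hinW, hZX, hZY]; ring
    have hAZX : (inner ℂ (AQ Z) X : ℂ) = 0 := by
      rw [inner_AQ_symm, hAX, ← inner_conj_symm, hZX, map_zero]
    have hAZY : (inner ℂ (AQ Z) Y : ℂ) = 0 := by
      rw [inner_AQ_symm, hAY, ← inner_conj_symm, hZY, map_zero]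
    have hb : (inner ℂ (AQ Z) W : ℂ) = 0 := by rw [hinW, hAZX, hAZY]; ring
    rw [jacobi_eval W Z 0 0 hWW hAWW ha hb]
    simp
  · have ha : (inner ℂ (Complex.I • W) W : ℂ) = -Complex.I := by
      rw [inner_smul_left, Complex.conj_I, hWW, mul_one]
    have hb : (inner ℂ (AQ (Complex.I • W)) W : ℂ) = 0 := by
      rw [AQ_smul, inner_smul_left, hAWW, mul_zero]
    rw [jacobi_eval W _ (-Complex.I) 0 hWW hAWW ha hb]
    simp only [JQ, Complex.neg_re, Complex.I_re, Complex.neg_im, Complex.I_im,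
      Complex.zero_re, Complex.zero_im, neg_zero, zero_smul, sub_zero]
    module
end
end

section
/- Let t ∈ (0, π/4], let X, Y ∈ ℝⁿ ⊂ ℂⁿ be orthonormal, and set N = cos t · X + sin t · i·Y (a unit vector which is not 𝔄-principal). Let T = {Z ∈ ℂⁿ : g(Z,N) = 0}, 𝒞 = {Z ∈ ℂⁿ : ⟨Z,N⟩ = 0} (complex inner product), and 𝒬 = {Z ∈ ℂⁿ : λ·Z ∈ T and λ·conj(Z) ∈ T for every λ ∈ ℂ with |λ| = 1} (the maximal 𝔄-invariant subspace of T). Then 𝒬 = {Z ∈ ℂⁿ : ⟨Z,X⟩ = 0 and ⟨Z,Y⟩ = 0}; in particular 𝒬 ⊆ 𝒞, and in the 𝔄-isotropic case t = π/4 one has 𝒬 = {Z ∈ 𝒞 : ⟨Z, i·X + Y⟩ = 0}, i.e. 𝒬 is the orthogonal complement in 𝒞 of the complex line ℂ·(i·X + Y). -/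
noncomputable section

lemma inner_AQ_real {n : ℕ} (Z X : EuclideanSpace ℂ (Fin n)) (hXreal : ∀ j, (X j).im = 0) :
    (inner ℂ (AQ Z) X : ℂ) = (starRingEnd ℂ) (inner ℂ Z X) := by
  simp only [PiLp.inner_apply, RCLike.inner_apply, AQ, map_sum, map_mul,
    RingHomCompTriple.comp_apply, RingHom.id_apply]
  refine Finset.sum_congr rfl fun j _ => ?_
  rw [Complex.conj_eq_iff_im.2 (hXreal j)]

lemma inner_real_smul_right {n : ℕ} (r : ℝ) (Z W : EuclideanSpace ℂ (Fin n)) :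
    (inner ℂ Z (r • W) : ℂ) = (r : ℂ) * inner ℂ Z W := by
  rw [← Complex.coe_smul, inner_smul_right]


/-- For `t ∈ (0, π/4]`, `X, Y ∈ ℝⁿ` orthonormal and
`N = cos t · X + sin t · i·Y` (a unit vector which is not `𝔄`-principal), the maximal
`𝔄`-invariant subspace `𝒬` of the tangent space `T = {Z : g(Z,N) = 0}` equals
`{Z : ⟨Z,X⟩ = 0 and ⟨Z,Y⟩ = 0}`; in particular `𝒬 ⊆ 𝒞 = {Z : ⟨Z,N⟩ = 0}`, and when
`t = π/4` one has `𝒬 = {Z ∈ 𝒞 : ⟨Z, i·X + Y⟩ = 0}`. -/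
theorem maximal_invariant_subspace_not_principal
    (n : ℕ) (hn : 2 ≤ n) (t : ℝ) (ht : t ∈ Set.Ioc (0 : ℝ) (Real.pi / 4))
    (X Y : EuclideanSpace ℂ (Fin n))
    (hXreal : ∀ j, (X j).im = 0) (hYreal : ∀ j, (Y j).im = 0)
    (hX : ‖X‖ = 1) (hY : ‖Y‖ = 1) (hXY : (inner ℂ X Y : ℂ) = 0)
    (N : EuclideanSpace ℂ (Fin n))
    (hN : N = Real.cos t • X + Real.sin t • (Complex.I • Y))
    (T C Q : Set (EuclideanSpace ℂ (Fin n)))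
    (hT : T = {Z | gQ Z N = 0})
    (hC : C = {Z | (inner ℂ Z N : ℂ) = 0})
    (hQ : Q = {Z | ∀ lam : ℂ, ‖lam‖ = 1 →
      lam • Z ∈ T ∧ lam • AQ Z ∈ T}) :
    Q = {Z | (inner ℂ Z X : ℂ) = 0 ∧ (inner ℂ Z Y : ℂ) = 0} ∧
    Q ⊆ C ∧
    (t = Real.pi / 4 →
      Q = {Z | Z ∈ C ∧ (inner ℂ Z (Complex.I • X + Y) : ℂ) = 0}) := by
  have hpi := Real.pi_pos
  have hc : (0 : ℝ) < Real.cos t :=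
    Real.cos_pos_of_mem_Ioo ⟨by linarith [ht.1], by linarith [ht.2]⟩
  have hs : (0 : ℝ) < Real.sin t :=
    Real.sin_pos_of_pos_of_lt_pi ht.1 (by linarith [ht.2])
  have hc' : (Real.cos t : ℂ) ≠ 0 := by exact_mod_cast hc.ne'
  have hs' : (Real.sin t : ℂ) ≠ 0 := by exact_mod_cast hs.ne'
  have hZN : ∀ Z : EuclideanSpace ℂ (Fin n),
      (inner ℂ Z N : ℂ) = (Real.cos t : ℂ) * inner ℂ Z X
        + (Real.sin t : ℂ) * (Complex.I * inner ℂ Z Y) := by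
    intro Z
    rw [hN, inner_add_right, inner_real_smul_right, inner_real_smul_right, inner_smul_right]
  -- characterization of Q
  have hQchar : ∀ Z, Z ∈ Q ↔ (inner ℂ Z X : ℂ) = 0 ∧ (inner ℂ Z Y : ℂ) = 0 := by
    intro Z
    rw [hQ]
    simp only [Set.mem_setOf_eq, hT, gQ]
    constructor
    · intro h
      have h1 := h 1 (by simp)
      have hI := h Complex.I (by simp)
      simp only [inner_smul_left, map_one, one_mul, Complex.conj_I] at h1 hI
      have hw : (inner ℂ Z N : ℂ) = 0 := by
        apply Complex.ext
        · exact h1.1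
        · have := hI.1
          simp only [neg_mul, Complex.neg_re, Complex.mul_re, Complex.I_re, Complex.I_im] at this
          simpa using this
      have hw' : (inner ℂ (AQ Z) N : ℂ) = 0 := by
        apply Complex.ext
        · exact h1.2
        · have := hI.2
          simp only [neg_mul, Complex.neg_re, Complex.mul_re, Complex.I_re, Complex.I_im] at this
          simpa using this
      rw [hZN] at hw hw'
      rw [inner_AQ_real Z X hXreal, inner_AQ_real Z Y hYreal] at hw'
      have hw'' := congrArg (starRingEnd ℂ) hw'
      simp only [map_add, map_mul, Complex.conj_ofReal, Complex.conj_conj, Complex.conj_I,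
        map_zero] at hw''
      have ha : (inner ℂ Z X : ℂ) = 0 := by
        have h2 : (Real.cos t : ℂ) * inner ℂ Z X = 0 := by linear_combination (hw + hw'') / 2
        exact (mul_eq_zero.1 h2).resolve_left hc'
      refine ⟨ha, ?_⟩
      have h3 : (Real.sin t : ℂ) * (Complex.I * inner ℂ Z Y) = 0 := by
        linear_combination hw - (Real.cos t : ℂ) * ha
      have := (mul_eq_zero.1 h3).resolve_left hs'
      have := (mul_eq_zero.1 this).resolve_left Complex.I_ne_zero
      exact this
    · rintro ⟨ha, hb⟩ lam hlam
      have hA1 : (inner ℂ (AQ Z) X : ℂ) = 0 := by rw [inner_AQ_real Z X hXreal, ha, map_zero]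
      have hA2 : (inner ℂ (AQ Z) Y : ℂ) = 0 := by rw [inner_AQ_real Z Y hYreal, hb, map_zero]
      constructor <;> rw [inner_smul_left, hZN] <;> simp [ha, hb, hA1, hA2]
  refine ⟨Set.ext fun Z => hQchar Z, ?_, ?_⟩
  · intro Z hZ
    obtain ⟨ha, hb⟩ := (hQchar Z).1 hZ
    rw [hC]
    simp only [Set.mem_setOf_eq]
    rw [hZN, ha, hb]
    ring
  · intro htv
    ext Z
    rw [hQchar Z, hC]
    simp only [Set.mem_setOf_eq]
    rw [hZN, inner_add_right, inner_smul_right]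
    constructor
    · rintro ⟨ha, hb⟩
      rw [ha, hb]; constructor <;> ring
    · rintro ⟨h1, h2⟩
      have hcs : Real.sin t = Real.cos t := by
        rw [htv, Real.sin_pi_div_four, Real.cos_pi_div_four]
      rw [hcs] at h1
      have ha : (inner ℂ Z X : ℂ) = 0 := by
        have h3 : (Real.cos t : ℂ) * ((2 : ℂ) * inner ℂ Z X) = 0 := by
          linear_combination h1 - (Real.cos t : ℂ) * Complex.I * h2
            + ((Real.cos t : ℂ) * inner ℂ Z X) * Complex.I_sq
        have := (mul_eq_zero.1 h3).resolve_left hc'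
        have := (mul_eq_zero.1 this).resolve_left two_ne_zero
        exact this
      refine ⟨ha, ?_⟩
      have : (inner ℂ Z Y : ℂ) = 0 := by linear_combination h2 - Complex.I * ha
      exact this
end
end

section
/- Let N = μ·X₀ where μ ∈ ℂ, |μ| = 1, and X₀ ∈ ℝⁿ ⊂ ℂⁿ is a unit vector with all coordinates real (i.e. N is 𝔄-principal). Let T = {Z ∈ ℂⁿ : g(Z,N) = 0}, 𝒞 = {Z ∈ ℂⁿ : ⟨Z,N⟩ = 0} (complex inner product), and 𝒬 = {Z ∈ ℂⁿ : λ·Z ∈ T and λ·conj(Z) ∈ T for every λ ∈ ℂ with |λ| = 1} (the maximal 𝔄-invariant subspace of T). Then 𝒬 = 𝒞. -/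
noncomputable section

/-- For an `𝔄`-principal unit vector `N = μ·X₀` (`|μ| = 1`, `X₀ ∈ ℝⁿ` a
unit vector with all real coordinates), the maximal `𝔄`-invariant subspace `𝒬` of
the tangent space `T = {Z : g(Z,N) = 0}` coincides with the maximal complex subspace
`𝒞 = {Z : ⟨Z,N⟩ = 0}`. -/
theorem maximal_invariant_subspace_principal
    (n : ℕ) (hn : 2 ≤ n) (μ : ℂ) (hμ : ‖μ‖ = 1)
    (X₀ : EuclideanSpace ℂ (Fin n))
    (hXreal : ∀ j, (X₀ j).im = 0) (hX : ‖X₀‖ = 1)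
    (N : EuclideanSpace ℂ (Fin n)) (hN : N = μ • X₀)
    (T C Q : Set (EuclideanSpace ℂ (Fin n)))
    (hT : T = {Z | gQ Z N = 0})
    (hC : C = {Z | (inner ℂ Z N : ℂ) = 0})
    (hQ : Q = {Z | ∀ lam : ℂ, ‖lam‖ = 1 →
      lam • Z ∈ T ∧ lam • AQ Z ∈ T}) :
    Q = C := by
  subst hN hT hC hQ
  have hμμ : μ * (starRingEnd ℂ) μ = 1 := by
    rw [Complex.mul_conj]
    norm_cast
    rw [Complex.normSq_eq_norm_sq, hμ]; norm_num
  ext Z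
  simp only [Set.mem_setOf_eq]
  have hA : (inner ℂ (AQ Z) (μ • X₀) : ℂ) = μ^2 * (starRingEnd ℂ) (inner ℂ Z (μ • X₀)) := by
    simp only [PiLp.inner_apply, RCLike.inner_apply, AQ, PiLp.toLp_apply, PiLp.smul_apply, smul_eq_mul,
      map_sum, map_mul, Complex.conj_conj, Finset.mul_sum]
    apply Finset.sum_congr rfl
    intro j _
    have hx : (starRingEnd ℂ) (X₀ j) = X₀ j := Complex.conj_eq_iff_im.mpr (hXreal j)
    rw [hx]
    linear_combination (-(Z j * X₀ j * μ)) * hμμ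
  constructor
  · intro h
    have h1 := (h 1 (by simp)).1
    have h2 := (h Complex.I (by simp)).1
    rw [one_smul] at h1
    have h2' : (inner ℂ (Complex.I • Z) (μ • X₀) : ℂ).re = 0 := h2
    rw [inner_smul_left] at h2'
    have h1' : (inner ℂ Z (μ • X₀) : ℂ).re = 0 := h1
    apply Complex.ext
    · simpa using h1'
    · simpa [Complex.mul_re, inner_smul_right, Complex.mul_im] using h2'
  · intro h lam hlam
    constructor
    · show (inner ℂ (lam • Z) (μ • X₀) : ℂ).re = 0
      rw [inner_smul_left, h, mul_zero, Complex.zero_re]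
    · show (inner ℂ (lam • AQ Z) (μ • X₀) : ℂ).re = 0
      rw [inner_smul_left, hA, h, map_zero, mul_zero, mul_zero, Complex.zero_re]
end
end
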